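/- arXiv:2602.07254 — 6 statements merged into one kernel-verified Lean document; each statement's English description precedes it below -/
import Mathlib

section
/- Let q be a prime power and F_q the finite field with q elements. Let a, b ∈ F_q with a ≠ 0, b ≠ 0, and a ≠ -b. Then the number of x ∈ F_q with a*x^3 - b*x^2 + x + 1 = 0 equals the number of x ∈ F_q with (a+b)*x^3 + (a+b^2)*x^2 + 2*a*b*x + a^2 = 0. -/
open Finset

theorem stmt_0 (F : Type*) [Field F] [Fintype F] [DecidableEq F]
    (a b : F) (ha : a ≠ 0) (hb : b ≠ 0) (hab : a ≠ -b) :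
    (Finset.univ.filter fun x : F => a * x ^ 3 - b * x ^ 2 + x + 1 = 0).card =
      (Finset.univ.filter fun x : F =>
        (a + b) * x ^ 3 + (a + b ^ 2) * x ^ 2 + 2 * a * b * x + a ^ 2 = 0).card := by
  apply Finset.card_bij' (fun x _ => a / (a * x - b)) (fun y _ => (b * y + a) / (a * y))
  · intro x hx
    simp only [Finset.mem_filter, Finset.mem_univ, true_and] at hx ⊢
    have hd : a * x - b ≠ 0 := by
      intro hd
      have hx1 : x = -1 := by linear_combination hx - x ^ 2 * hd
      apply hab
      rw [hx1] at hd
      linear_combination -hd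
    have key : (a + b) * (a / (a * x - b)) ^ 3 + (a + b ^ 2) * (a / (a * x - b)) ^ 2 +
        2 * a * b * (a / (a * x - b)) + a ^ 2 =
        a ^ 4 * (a * x ^ 3 - b * x ^ 2 + x + 1) / (a * x - b) ^ 3 := by
      field_simp
      ring
    rw [key, hx, mul_zero, zero_div]
  · intro y hy
    simp only [Finset.mem_filter, Finset.mem_univ, true_and] at hy ⊢
    have hy0 : y ≠ 0 := by
      intro h0
      rw [h0] at hy
      apply ha
      have : a ^ 2 = 0 := by linear_combination hy
      exact pow_eq_zero_iff (by norm_num) |>.mp this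
    have key : a * ((b * y + a) / (a * y)) ^ 3 - b * ((b * y + a) / (a * y)) ^ 2 +
        (b * y + a) / (a * y) + 1 =
        a ^ 2 * ((a + b) * y ^ 3 + (a + b ^ 2) * y ^ 2 + 2 * a * b * y + a ^ 2) / (a * y) ^ 3 := by
      field_simp
      ring
    rw [key, hy, mul_zero, zero_div]
  · intro x hx
    simp only [Finset.mem_filter, Finset.mem_univ, true_and] at hx
    have hd : a * x - b ≠ 0 := by
      intro hd
      have hx1 : x = -1 := by linear_combination hx - x ^ 2 * hd
      apply hab
      rw [hx1] at hd
      linear_combination -hd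
    field_simp
    ring
  · intro y hy
    simp only [Finset.mem_filter, Finset.mem_univ, true_and] at hy
    have hy0 : y ≠ 0 := by
      intro h0
      rw [h0] at hy
      apply ha
      have : a ^ 2 = 0 := by linear_combination hy
      exact pow_eq_zero_iff (by norm_num) |>.mp this
    have hd : a * ((b * y + a) / (a * y)) - b = a / y := by
      field_simp
      ring
    rw [hd]
    field_simp
end

section
/- Let F_q be a finite field and a ∈ F_q with a ≠ 0. Then the number of x ∈ F_q satisfying a*x^3 + a*x^2 + x + 1 = 0 is one more than the number of x ∈ F_q satisfying (a + a^2)*x^2 - 2*a^2*x + a^2 = 0. -/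
open Finset

theorem stmt_1 (F : Type*) [Field F] [Fintype F] [DecidableEq F]
    (a : F) (ha : a ≠ 0) :
    (Finset.univ.filter fun x : F => a * x ^ 3 + a * x ^ 2 + x + 1 = 0).card =
      (Finset.univ.filter fun x : F =>
        (a + a ^ 2) * x ^ 2 - 2 * a ^ 2 * x + a ^ 2 = 0).card + 1 := by
  by_cases ha1 : a + 1 = 0
  · have ham : a = -1 := by linear_combination ha1
    subst ham
    by_cases h2 : (2 : F) = 0
    · have hcubic : (Finset.univ.filter fun x : F =>
          (-1 : F) * x ^ 3 + (-1) * x ^ 2 + x + 1 = 0) = {1} := by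
        ext x
        simp only [mem_filter, mem_univ, true_and, mem_singleton]
        constructor
        · intro h
          have h' : (x - 1) * (x + 1) ^ 2 = 0 := by linear_combination -h
          rcases mul_eq_zero.mp h' with h'' | h''
          · linear_combination h''
          · have hx : x + 1 = 0 := pow_eq_zero_iff (n := 2) (by norm_num) |>.mp h''
            linear_combination hx - h2
        · rintro rfl; ring
      have hquad : (Finset.univ.filter fun x : F =>
          ((-1 : F) + (-1) ^ 2) * x ^ 2 - 2 * (-1) ^ 2 * x + (-1) ^ 2 = 0) = ∅ := by
        ext x
        simp only [mem_filter, mem_univ, true_and, notMem_empty, iff_false]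
        intro h
        have : (1 : F) = 0 := by linear_combination h + x * h2
        exact one_ne_zero this
      rw [hcubic, hquad]
      simp
    · have hcubic : (Finset.univ.filter fun x : F =>
          (-1 : F) * x ^ 3 + (-1) * x ^ 2 + x + 1 = 0) = {1, -1} := by
        ext x
        simp only [mem_filter, mem_univ, true_and, mem_insert, mem_singleton]
        constructor
        · intro h
          have h' : (x - 1) * (x + 1) ^ 2 = 0 := by linear_combination -h
          rcases mul_eq_zero.mp h' with h'' | h''
          · left; linear_combination h''
          · right
            have hx : x + 1 = 0 := pow_eq_zero_iff (n := 2) (by norm_num) |>.mp h''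
            linear_combination hx
        · rintro (rfl | rfl) <;> ring
      have hquad : (Finset.univ.filter fun x : F =>
          ((-1 : F) + (-1) ^ 2) * x ^ 2 - 2 * (-1) ^ 2 * x + (-1) ^ 2 = 0) = {2⁻¹} := by
        ext x
        simp only [mem_filter, mem_univ, true_and, mem_singleton]
        constructor
        · intro h
          field_simp
          linear_combination -h
        · rintro rfl
          field_simp
          ring
      rw [hcubic, hquad]
      rw [Finset.card_insert_of_notMem (by
        simp only [mem_singleton]
        intro h
        exact h2 (by linear_combination h)), Finset.card_singleton,
        Finset.card_singleton]
  · set S := Finset.univ.filter (fun x : F => a * x ^ 2 + 1 = 0) with hS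
    have hcubic : (Finset.univ.filter fun x : F =>
        a * x ^ 3 + a * x ^ 2 + x + 1 = 0) = insert (-1) S := by
      ext x
      simp only [hS, mem_filter, mem_univ, true_and, mem_insert]
      constructor
      · intro h
        have h' : (x + 1) * (a * x ^ 2 + 1) = 0 := by linear_combination h
        rcases mul_eq_zero.mp h' with h'' | h''
        · left; linear_combination h''
        · right; exact h''
      · rintro (rfl | h)
        · ring
        · linear_combination (x + 1) * h
    have hnotmem : (-1 : F) ∉ S := by
      simp only [hS, mem_filter, mem_univ, true_and]
      intro h
      exact ha1 (by linear_combination h)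
    have hquad : (Finset.univ.filter fun x : F =>
        (a + a ^ 2) * x ^ 2 - 2 * a ^ 2 * x + a ^ 2 = 0)
        = S.image (fun x => a * (1 + x) / (1 + a)) := by
      have h1a : (1 : F) + a ≠ 0 := fun h => ha1 (by linear_combination h)
      ext y
      simp only [hS, mem_filter, mem_univ, true_and, mem_image]
      constructor
      · intro h
        refine ⟨((1 + a) * y - a) / a, ?_, ?_⟩
        · field_simp
          apply mul_left_cancel₀ ha
          linear_combination (1 + a) * h
        · field_simp
          ring
      · rintro ⟨x, hx, rfl⟩
        field_simp
        linear_combination a ^ 2 * hx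
    have hinj : Function.Injective (fun x : F => a * (1 + x) / (1 + a)) := by
      have h1a : (1 : F) + a ≠ 0 := fun h => ha1 (by linear_combination h)
      intro x y h
      simp only at h
      field_simp at h
      exact add_left_cancel h
    rw [hcubic, hquad, Finset.card_insert_of_notMem hnotmem,
      Finset.card_image_of_injective _ hinj]
end

section
/- Let F_q be a finite field and a, b ∈ F_q both nonzero. Then the number of x ∈ F_q with a*x^3 - b*x^2 + 1 = 0 equals the number of x ∈ F_q with a*x^3 + b^2*x^2 + 2*a*b*x + a^2 = 0. -/
open Finset

theorem stmt_2 (F : Type*) [Field F] [Fintype F] [DecidableEq F]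
    (a b : F) (ha : a ≠ 0) (hb : b ≠ 0) :
    (Finset.univ.filter fun x : F => a * x ^ 3 - b * x ^ 2 + 1 = 0).card =
      (Finset.univ.filter fun x : F =>
        a * x ^ 3 + b ^ 2 * x ^ 2 + 2 * a * b * x + a ^ 2 = 0).card := by
  apply Finset.card_nbij' (fun x => -a * x ^ 2) (fun y => (a + b * y) / (a * y))
  · intro x hx
    simp only [mem_coe, mem_filter, mem_univ, true_and] at hx ⊢
    linear_combination (-a ^ 2 * (a * x ^ 3 + b * x ^ 2 - 1)) * hx
  · intro y hy
    simp only [mem_coe, mem_filter, mem_univ, true_and] at hy ⊢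
    have hy0 : y ≠ 0 := by
      rintro rfl; simp at hy
      exact ha hy
    set x := (a + b * y) / (a * y) with hxdef
    have e1 : a * x ^ 2 = -y := by
      rw [hxdef]; field_simp; linear_combination hy
    have e3 : a * x * y = a + b * y := by
      rw [hxdef]; field_simp
    have key : a ^ 2 * (a * x ^ 3 - b * x ^ 2 + 1) = 0 := by
      linear_combination (a ^ 2 * x - a * b) * e1 - a * e3
    have := mul_eq_zero.mp key
    rcases this with h | h
    · exact absurd h (pow_ne_zero 2 ha)
    · exact h
  · intro x hx
    simp only [mem_coe, mem_filter, mem_univ, true_and] at hx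
    have hx0 : x ≠ 0 := by rintro rfl; simp at hx
    field_simp
    linear_combination -hx
  · intro y hy
    simp only [mem_coe, mem_filter, mem_univ, true_and] at hy
    have hy0 : y ≠ 0 := by
      rintro rfl; simp at hy
      exact ha hy
    field_simp
    linear_combination -hy
end

section
/- Let F_q be a finite field and a, b ∈ F_q with a ≠ 0 and b ≠ 0. The number of quadruples (u, v, x, y) ∈ F_q^4 satisfying both equations (i) -y - u*v + a*u*x*y - b*u*v*x - a*v*x^2 + b*u^2*y = 0 and (ii) -(1 + b*x)*v^2 - y*(a*x - b*u)*v + a*u*y^2 = 0, is equal to q^2 + (q^2 - q)*N, where N is the number of w ∈ F_q with a*w^3 + b^2*w^2 + 2*a*b*w + a^2 = 0. -/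
open Finset

theorem stmt_7 (F : Type*) [Field F] [Fintype F] [DecidableEq F]
    (a b : F) (ha : a ≠ 0) (hb : b ≠ 0) :
    (Finset.univ.filter fun p : F × F × F × F =>
        -p.2.2.2 - p.1 * p.2.1 + a * p.1 * p.2.2.1 * p.2.2.2
          - b * p.1 * p.2.1 * p.2.2.1 - a * p.2.1 * p.2.2.1 ^ 2
          + b * p.1 ^ 2 * p.2.2.2 = 0 ∧
        -(1 + b * p.2.2.1) * p.2.1 ^ 2
          - p.2.2.2 * (a * p.2.2.1 - b * p.1) * p.2.1
          + a * p.1 * p.2.2.2 ^ 2 = 0).card =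
      Fintype.card F ^ 2 + (Fintype.card F ^ 2 - Fintype.card F) *
        (Finset.univ.filter fun w : F =>
          a * w ^ 3 + b ^ 2 * w ^ 2 + 2 * a * b * w + a ^ 2 = 0).card := by
  classical
  set q := Fintype.card F with hq
  set C : Finset F := Finset.univ.filter fun w : F =>
      a * w ^ 3 + b ^ 2 * w ^ 2 + 2 * a * b * w + a ^ 2 = 0 with hC
  set pred : F × F × F × F → Prop := fun p =>
        -p.2.2.2 - p.1 * p.2.1 + a * p.1 * p.2.2.1 * p.2.2.2
          - b * p.1 * p.2.1 * p.2.2.1 - a * p.2.1 * p.2.2.1 ^ 2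
          + b * p.1 ^ 2 * p.2.2.2 = 0 ∧
        -(1 + b * p.2.2.1) * p.2.1 ^ 2
          - p.2.2.2 * (a * p.2.2.1 - b * p.1) * p.2.1
          + a * p.1 * p.2.2.2 ^ 2 = 0 with hpred
  set S : Finset (F × F × F × F) := Finset.univ.filter pred with hS
  -- roots of the cubic satisfy a + b * t ≠ 0
  have hroot_ne : ∀ t : F, a * t ^ 3 + b ^ 2 * t ^ 2 + 2 * a * b * t + a ^ 2 = 0 →
      a + b * t ≠ 0 := by
    intro t hc habt
    have ht4 : b * t ^ 4 = 0 := by linear_combination -hc + (t ^ 3 + (a + b * t)) * habt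
    have ht : t = 0 := by
      have := mul_eq_zero.1 ht4
      rcases this with h | h
      · exact absurd h hb
      · exact pow_eq_zero_iff (by norm_num) |>.1 h
    rw [ht, mul_zero, add_zero] at habt
    exact ha habt
  -- split on y = 0
  have hsplit := Finset.card_filter_add_card_filter_not
    (s := S) (p := fun p : F × F × F × F => p.2.2.2 = 0)
  -- Part 1 : y = 0 part has q^2 elements
  have h1card : (S.filter fun p : F × F × F × F => p.2.2.2 = 0).card = q ^ 2 := by
    have heq : (S.filter fun p : F × F × F × F => p.2.2.2 = 0) =
        Finset.univ.filter (fun p : F × F × F × F => p.2.1 = 0 ∧ p.2.2.2 = 0) := by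
      rw [hS, Finset.filter_filter]
      ext ⟨u, v, x, y⟩
      simp only [Finset.mem_filter, Finset.mem_univ, true_and, hpred]
      constructor
      · rintro ⟨⟨h1, h2⟩, hy⟩
        subst hy
        refine ⟨?_, rfl⟩
        by_contra hv
        have hbx : (1 + b * x) * v ^ 2 = 0 := by linear_combination -h2
        have hbx0 : 1 + b * x = 0 := by
          rcases mul_eq_zero.1 hbx with h | h
          · exact h
          · exact absurd (pow_eq_zero_iff (by norm_num) |>.1 h) hv
        have hvu : v * (u * (1 + b * x) + a * x ^ 2) = 0 := by linear_combination -h1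
        have hx2 : u * (1 + b * x) + a * x ^ 2 = 0 := by
          rcases mul_eq_zero.1 hvu with h | h
          · exact absurd h hv
          · exact h
        have hax2 : a * x ^ 2 = 0 := by
          rw [hbx0, mul_zero, zero_add] at hx2; exact hx2
        have hx : x = 0 := by
          rcases mul_eq_zero.1 hax2 with h | h
          · exact absurd h ha
          · exact pow_eq_zero_iff (by norm_num) |>.1 h
        rw [hx, mul_zero, add_zero] at hbx0
        exact one_ne_zero hbx0
      · rintro ⟨hv, hy⟩
        subst hv; subst hy
        refine ⟨⟨by ring, by ring⟩, rfl⟩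
    rw [heq]
    have heq2 : Finset.univ.filter (fun p : F × F × F × F => p.2.1 = 0 ∧ p.2.2.2 = 0) =
        (Finset.univ : Finset F) ×ˢ (({0} : Finset F) ×ˢ
          ((Finset.univ : Finset F) ×ˢ ({0} : Finset F))) := by
      ext ⟨u, v, x, y⟩
      simp only [Finset.mem_filter, Finset.mem_univ, true_and, Finset.mem_product,
        Finset.mem_singleton]
    rw [heq2]
    simp [Finset.card_product, hq]
    ring
  -- Part 2 : y ≠ 0 part
  have h2card : (S.filter fun p : F × F × F × F => ¬ p.2.2.2 = 0).card =
      (q - 1) * (q * C.card) := by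
    have hbij : (S.filter fun p : F × F × F × F => ¬ p.2.2.2 = 0).card =
        ((Finset.univ.filter (fun y : F => y ≠ 0)) ×ˢ
          ((Finset.univ : Finset F) ×ˢ C)).card := by
      apply Finset.card_nbij'
        (i := fun p : F × F × F × F => (p.2.2.2, p.2.2.1, p.2.1 / p.2.2.2))
        (j := fun z : F × F × F =>
          (z.2.2 * ((1 + b * z.2.1) * z.2.2 + a * z.2.1) / (a + b * z.2.2),
            z.2.2 * z.1, z.2.1, z.1))
      · -- maps S₁ into target
        rintro ⟨u, v, x, y⟩ hp
        simp only [hS, Finset.mem_filter, Finset.mem_univ, true_and, hpred, Finset.mem_coe] at hp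
        obtain ⟨⟨h1, h2⟩, hy⟩ := hp
        simp only [Finset.mem_product, Finset.mem_filter, Finset.mem_univ, true_and, hC, Finset.mem_coe]
        refine ⟨hy, ?_⟩
        have hP : (a * v ^ 3 + b ^ 2 * v ^ 2 * y + 2 * a * b * v * y ^ 2 + a ^ 2 * y ^ 3)
            * y ^ 2 = 0 := by
          linear_combination (-(y ^ 2 * (a * y + b * v) ^ 2)) * h1 +
            (b * y * (u * y * (a * y + b * v) + v * ((1 + b * x) * v + a * x * y)) +
              (-v + a * x * y - b * v * x) * (y * (a * y + b * v))) * h2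
        have hP0 : a * v ^ 3 + b ^ 2 * v ^ 2 * y + 2 * a * b * v * y ^ 2 + a ^ 2 * y ^ 3 = 0 := by
          rcases mul_eq_zero.1 hP with h | h
          · exact h
          · exact absurd (pow_eq_zero_iff (by norm_num) |>.1 h) hy
        field_simp
        linear_combination hP0
      · -- maps target into S₁
        rintro ⟨y, x, t⟩ hz
        simp only [Finset.mem_product, Finset.mem_filter, Finset.mem_univ, true_and, hC, Finset.mem_coe] at hz
        obtain ⟨hy, hc⟩ := hz
        have hM : a + b * t ≠ 0 := hroot_ne t hc
        simp only [hS, Finset.mem_filter, Finset.mem_univ, true_and, hpred, Finset.mem_coe]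
        refine ⟨⟨?_, ?_⟩, hy⟩
        · have hM2 : a + t * b ≠ 0 := by rwa [mul_comm t b]
          field_simp
          linear_combination (-y) * hc
        · field_simp
          ring
      · -- left inverse
        rintro ⟨u, v, x, y⟩ hp
        simp only [hS, Finset.mem_filter, Finset.mem_univ, true_and, hpred, Finset.mem_coe] at hp
        obtain ⟨⟨h1, h2⟩, hy⟩ := hp
        have hM : a * y + b * v ≠ 0 := by
          intro hM
          have hR : v * ((1 + b * x) * v + a * x * y) = 0 := by
            linear_combination (-1 : F) * h2 + (u * y) * hM
          rcases mul_eq_zero.1 hR with h | h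
          · rw [h, mul_zero, add_zero] at hM
            exact mul_ne_zero ha hy hM
          · have : a * y = 0 := by linear_combination (-b) * h + (1 + b * x) * hM
            exact mul_ne_zero ha hy this
        have hM' : a + b * (v / y) ≠ 0 := by
          intro h
          apply hM
          have := mul_eq_zero_of_left h y
          field_simp at this
          linear_combination this
        have hv' : v / y * y = v := by field_simp
        have hu' : v / y * ((1 + b * x) * (v / y) + a * x) / (a + b * (v / y)) = u := by
          field_simp
          rw [div_eq_iff (by intro h; apply hM; linear_combination h)]
          linear_combination (-1 : F) * h2
        dsimp only
        rw [hu', hv']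
      · -- right inverse
        rintro ⟨y, x, t⟩ hz
        simp only [Finset.mem_product, Finset.mem_filter, Finset.mem_univ, true_and, hC, Finset.mem_coe] at hz
        obtain ⟨hy, -⟩ := hz
        have hty : t * y / y = t := by rw [mul_div_assoc, div_self hy, mul_one]
        dsimp only
        rw [hty]
    have hA : (Finset.univ.filter (fun y : F => y ≠ 0)).card = q - 1 := by
      have h0 : (Finset.univ.filter (fun y : F => y ≠ 0)) = ({0} : Finset F)ᶜ := by
        ext y; simp
      rw [h0, Finset.card_compl, Finset.card_singleton]
    have hB : ((Finset.univ : Finset F) ×ˢ C).card = q * C.card := by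
      rw [Finset.card_product, Finset.card_univ]
    rw [hbij, Finset.card_product, hA, hB]
  -- combine
  have : S.card = q ^ 2 + (q - 1) * (q * C.card) := by
    rw [← hsplit, h1card, h2card]
  rw [this]
  congr 1
  have hqq : (q - 1) * q = q ^ 2 - q := by
    rw [Nat.sub_mul, one_mul, pow_two]
  rw [← mul_assoc, hqq]
end

section
/- Let F_q be a finite field and a, b ∈ F_q with a ≠ 0, b ≠ 0, a ≠ -b. The number of quadruples (u, v, x, y) ∈ F_q^4 satisfying both (i) -y + v*x - u*y - u*v + a*u*x*y - b*u*v*x - a*v*x^2 + b*u^2*y = 0 and (ii) -(1 + b*x)*v^2 - y*(a*x - b*u)*v + a*u*y^2 = 0, equals q^2 + (q^2 - q)*N, where N is the number of w ∈ F_q with (a+b)*w^3 + (a+b^2)*w^2 + 2*a*b*w + a^2 = 0. -/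
open Finset

/-- Forward elimination: from a solution with `v ≠ 0`, the slope `s = y/v` is a root of
the reversed cubic, and `x` is determined. -/
lemma stmt8_aux_fwd {F : Type*} [Field F] (a b u v x y : F) (ha : a ≠ 0) (hv : v ≠ 0)
    (h1 : -y + v * x - u * y - u * v + a * u * x * y - b * u * v * x
        - a * v * x ^ 2 + b * u ^ 2 * y = 0)
    (h2 : -(1 + b * x) * v ^ 2 - y * (a * x - b * u) * v + a * u * y ^ 2 = 0) :
    (a + b) + (a + b ^ 2) * (y * v⁻¹) + 2 * a * b * (y * v⁻¹) ^ 2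
        + a ^ 2 * (y * v⁻¹) ^ 3 = 0 ∧
      x = u * (y * v⁻¹) - (b + a * (y * v⁻¹))⁻¹ := by
  obtain ⟨s, rfl⟩ : ∃ s, y = s * v := ⟨y * v⁻¹, by field_simp⟩
  rw [mul_inv_cancel_right₀ hv]
  have h1' : -s + x - u * s - u + a * u * x * s - b * u * x - a * x ^ 2 + b * u ^ 2 * s = 0 := by
    apply mul_left_cancel₀ hv
    linear_combination h1
  have h2' : -(1 + b * x) - s * (a * x - b * u) + a * u * s ^ 2 = 0 := by
    apply mul_left_cancel₀ (pow_ne_zero 2 hv)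
    linear_combination h2
  have hC : b + a * s ≠ 0 := by
    intro hbas
    have h10 : (1 : F) = 0 := by linear_combination -h2' + (u * s - x) * hbas
    exact one_ne_zero h10
  constructor
  · linear_combination (-(b + a * s) ^ 2) * h1' +
      ((-a) * ((-(b + a * s)) * x + 1 - u * s * (b + a * s)) +
        (1 + a * u * s - b * u) * (-(b + a * s))) * h2'
  · have hx : x * (b + a * s) = u * s * (b + a * s) - 1 := by linear_combination -h2'
    linear_combination (b + a * s)⁻¹ * hx - (x - u * s) * mul_inv_cancel₀ hC

/-- Backward construction: from a root `s` of the reversed cubic and arbitrary `u, v`,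
the tuple `(u, v, u*s - (b+a*s)⁻¹, s*v)` is a solution. -/
lemma stmt8_aux_bwd {F : Type*} [Field F] (a b u v s : F) (ha : a ≠ 0)
    (hg : (a + b) + (a + b ^ 2) * s + 2 * a * b * s ^ 2 + a ^ 2 * s ^ 3 = 0) :
    -(s * v) + v * (u * s - (b + a * s)⁻¹) - u * (s * v) - u * v
        + a * u * (u * s - (b + a * s)⁻¹) * (s * v) - b * u * v * (u * s - (b + a * s)⁻¹)
        - a * v * (u * s - (b + a * s)⁻¹) ^ 2 + b * u ^ 2 * (s * v) = 0 ∧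
      -(1 + b * (u * s - (b + a * s)⁻¹)) * v ^ 2
        - (s * v) * (a * (u * s - (b + a * s)⁻¹) - b * u) * v + a * u * (s * v) ^ 2 = 0 := by
  have hC : b + a * s ≠ 0 := by
    intro hbas
    apply ha
    linear_combination hg - (a * s ^ 2 + b * s + 1) * hbas
  have h2' : -(1 + b * (u * s - (b + a * s)⁻¹))
      - s * (a * (u * s - (b + a * s)⁻¹) - b * u) + a * u * s ^ 2 = 0 := by
    linear_combination mul_inv_cancel₀ hC
  have h1' : -s + (u * s - (b + a * s)⁻¹) - u * s - u
      + a * u * (u * s - (b + a * s)⁻¹) * s - b * u * (u * s - (b + a * s)⁻¹)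
      - a * (u * s - (b + a * s)⁻¹) ^ 2 + b * u ^ 2 * s = 0 := by
    apply mul_left_cancel₀ (pow_ne_zero 2 hC)
    linear_combination ((-a) * ((-(b + a * s)) * (u * s - (b + a * s)⁻¹) + 1
        - u * s * (b + a * s)) + (1 + a * u * s - b * u) * (-(b + a * s))) * h2' - hg
  exact ⟨by linear_combination v * h1', by linear_combination v ^ 2 * h2'⟩

theorem stmt_8 (F : Type*) [Field F] [Fintype F] [DecidableEq F]
    (a b : F) (ha : a ≠ 0) (hb : b ≠ 0) (hab : a ≠ -b) :
    (Finset.univ.filter fun p : F × F × F × F =>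
        -p.2.2.2 + p.2.1 * p.2.2.1 - p.1 * p.2.2.2 - p.1 * p.2.1
          + a * p.1 * p.2.2.1 * p.2.2.2 - b * p.1 * p.2.1 * p.2.2.1
          - a * p.2.1 * p.2.2.1 ^ 2 + b * p.1 ^ 2 * p.2.2.2 = 0 ∧
        -(1 + b * p.2.2.1) * p.2.1 ^ 2
          - p.2.2.2 * (a * p.2.2.1 - b * p.1) * p.2.1
          + a * p.1 * p.2.2.2 ^ 2 = 0).card =
      Fintype.card F ^ 2 + (Fintype.card F ^ 2 - Fintype.card F) *
        (Finset.univ.filter fun w : F =>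
          (a + b) * w ^ 3 + (a + b ^ 2) * w ^ 2 + 2 * a * b * w + a ^ 2 = 0).card := by
  set q := Fintype.card F with hq
  set N := (Finset.univ.filter fun w : F =>
      (a + b) * w ^ 3 + (a + b ^ 2) * w ^ 2 + 2 * a * b * w + a ^ 2 = 0).card with hN
  set P : F × F × F × F → Prop := fun p =>
      -p.2.2.2 + p.2.1 * p.2.2.1 - p.1 * p.2.2.2 - p.1 * p.2.1
        + a * p.1 * p.2.2.1 * p.2.2.2 - b * p.1 * p.2.1 * p.2.2.1
        - a * p.2.1 * p.2.2.1 ^ 2 + b * p.1 ^ 2 * p.2.2.2 = 0 ∧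
      -(1 + b * p.2.2.1) * p.2.1 ^ 2
        - p.2.2.2 * (a * p.2.2.1 - b * p.1) * p.2.1
        + a * p.1 * p.2.2.2 ^ 2 = 0 with hP
  -- split according to v = 0 or not
  have hsplit := Finset.card_filter_add_card_filter_not
    (s := Finset.univ.filter P) (p := fun p : F × F × F × F => p.2.1 = 0)
  rw [Finset.filter_filter, Finset.filter_filter] at hsplit
  -- Part A : v = 0 forces y = 0
  have hA : (Finset.univ.filter fun p : F × F × F × F => P p ∧ p.2.1 = 0).card = q ^ 2 := by
    have hset : (Finset.univ.filter fun p : F × F × F × F => P p ∧ p.2.1 = 0) =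
        (Finset.univ.filter fun p : F × F × F × F => p.2.1 = 0 ∧ p.2.2.2 = 0) := by
      ext ⟨u, v, x, y⟩
      simp only [Finset.mem_filter, Finset.mem_univ, true_and, hP]
      constructor
      · rintro ⟨⟨h1, h2⟩, hv⟩
        subst hv
        refine ⟨rfl, ?_⟩
        by_contra hy
        have h2' : a * u * y ^ 2 = 0 := by linear_combination h2
        have hu : u = 0 := by
          rcases mul_eq_zero.mp h2' with h | h
          · rcases mul_eq_zero.mp h with h' | h'
            · exact absurd h' ha
            · exact h'
          · exact absurd (pow_eq_zero_iff (by norm_num : (2:ℕ) ≠ 0) |>.mp h) hy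
        subst hu
        exact hy (by linear_combination -h1)
      · rintro ⟨hv, hy⟩
        subst hv; subst hy
        exact ⟨⟨by ring, by ring⟩, rfl⟩
    rw [hset]
    have hcard : (Finset.univ.filter fun p : F × F × F × F =>
        p.2.1 = 0 ∧ p.2.2.2 = 0).card = (Finset.univ : Finset (F × F)).card := by
      apply Finset.card_nbij' (fun p => (p.1, p.2.2.1)) (fun t => (t.1, 0, t.2, 0))
      · intro p _; exact Finset.mem_univ _
      · intro t _; simp
      · rintro ⟨u, v, x, y⟩ hp
        simp only [Finset.mem_coe, Finset.mem_filter, Finset.mem_univ, true_and] at hp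
        obtain ⟨h1, h2⟩ := hp
        simp [h1, h2]
      · rintro ⟨u, x⟩ _; rfl
    rw [hcard, Finset.card_univ, Fintype.card_prod, ← hq, sq]
  -- Part B : v ≠ 0 part
  have hB : (Finset.univ.filter fun p : F × F × F × F => P p ∧ ¬p.2.1 = 0).card =
      (q - 1) * (q * N) := by
    have hbij : (Finset.univ.filter fun p : F × F × F × F => P p ∧ ¬p.2.1 = 0).card =
        (Finset.univ.filter fun t : F × F × F => t.1 ≠ 0 ∧
          (a + b) + (a + b ^ 2) * t.2.2 + 2 * a * b * t.2.2 ^ 2 + a ^ 2 * t.2.2 ^ 3 = 0).card := by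
      apply Finset.card_nbij' (fun p => (p.2.1, p.1, p.2.2.2 * p.2.1⁻¹))
        (fun t => (t.2.1, t.1, t.2.1 * t.2.2 - (b + a * t.2.2)⁻¹, t.2.2 * t.1))
      · rintro ⟨u, v, x, y⟩ hp
        simp only [Finset.mem_coe, Finset.mem_filter, Finset.mem_univ, true_and, hP] at hp ⊢
        obtain ⟨⟨h1, h2⟩, hv⟩ := hp
        exact ⟨hv, (stmt8_aux_fwd a b u v x y ha hv h1 h2).1⟩
      · rintro ⟨v, u, s⟩ ht
        simp only [Finset.mem_coe, Finset.mem_filter, Finset.mem_univ, true_and, hP] at ht ⊢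
        obtain ⟨hv, hg⟩ := ht
        obtain ⟨h1, h2⟩ := stmt8_aux_bwd a b u v s ha hg
        exact ⟨⟨h1, h2⟩, hv⟩
      · rintro ⟨u, v, x, y⟩ hp
        simp only [Finset.mem_coe, Finset.mem_filter, Finset.mem_univ, true_and, hP] at hp
        obtain ⟨⟨h1, h2⟩, hv⟩ := hp
        obtain ⟨-, hx⟩ := stmt8_aux_fwd a b u v x y ha hv h1 h2
        exact Prod.ext rfl (Prod.ext rfl (Prod.ext hx.symm (inv_mul_cancel_right₀ hv y)))
      · rintro ⟨v, u, s⟩ ht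
        simp only [Finset.mem_coe, Finset.mem_filter, Finset.mem_univ, true_and] at ht
        exact Prod.ext rfl (Prod.ext rfl (mul_inv_cancel_right₀ ht.1 s))
    rw [hbij]
    have hprod : (Finset.univ.filter fun t : F × F × F => t.1 ≠ 0 ∧
        (a + b) + (a + b ^ 2) * t.2.2 + 2 * a * b * t.2.2 ^ 2 + a ^ 2 * t.2.2 ^ 3 = 0) =
        (Finset.univ.filter fun v : F => v ≠ 0) ×ˢ ((Finset.univ : Finset F) ×ˢ
          (Finset.univ.filter fun s : F =>
            (a + b) + (a + b ^ 2) * s + 2 * a * b * s ^ 2 + a ^ 2 * s ^ 3 = 0)) := by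
      ext ⟨v, u, s⟩
      simp [Finset.mem_product]
    rw [hprod, Finset.card_product, Finset.card_product]
    have hv1 : (Finset.univ.filter fun v : F => v ≠ 0).card = q - 1 := by
      rw [Finset.filter_ne' Finset.univ 0, Finset.card_erase_of_mem (Finset.mem_univ 0),
        Finset.card_univ]
    have hNg : (Finset.univ.filter fun s : F =>
        (a + b) + (a + b ^ 2) * s + 2 * a * b * s ^ 2 + a ^ 2 * s ^ 3 = 0).card = N := by
      rw [hN]
      apply Finset.card_nbij' (fun s => s⁻¹) (fun w => w⁻¹)
      · intro s hs
        simp only [Finset.mem_coe, Finset.mem_filter, Finset.mem_univ, true_and] at hs ⊢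
        have hs0 : s ≠ 0 := by
          intro h; subst h
          have hab0 : a + b = 0 := by linear_combination hs
          exact hab (by linear_combination hab0)
        field_simp
        linear_combination hs
      · intro w hw
        simp only [Finset.mem_coe, Finset.mem_filter, Finset.mem_univ, true_and] at hw ⊢
        have hw0 : w ≠ 0 := by
          intro h; subst h
          have ha2 : a ^ 2 = 0 := by linear_combination hw
          exact ha (pow_eq_zero_iff (by norm_num : (2:ℕ) ≠ 0) |>.mp ha2)
        field_simp
        linear_combination hw
      · intro s _; exact inv_inv s
      · intro w _; exact inv_inv w
    rw [hv1, Finset.card_univ, ← hq, hNg]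
  rw [← hsplit, hA, hB]
  -- arithmetic : q^2 + (q-1)*(q*N) = q^2 + (q^2-q)*N
  have hq1 : 1 ≤ q := Fintype.card_pos
  obtain ⟨m, hm⟩ : ∃ m, q = m + 1 := ⟨q - 1, (Nat.succ_pred_eq_of_pos hq1).symm⟩
  rw [hm]
  have e : (m + 1) ^ 2 = (m + 1) * m + (m + 1) := by ring
  rw [e, Nat.add_sub_cancel, Nat.add_sub_cancel]
  ring
end

section
/- Let F_q be a finite field and a, b ∈ F_q with a ≠ 0. The number of triples (y, z, w) ∈ F_q^3 satisfying -z^2 + y*w = 0, a*y^2 + b*y*z - z*w = 0, and a*y*z + b*z^2 - w^2 = 0, equals 1 + (q - 1)*N, where N is the number of x ∈ F_q with a*x^3 - b*x^2 + 1 = 0. -/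
open Finset

theorem stmt_17 (F : Type*) [Field F] [Fintype F] [DecidableEq F]
    (a b : F) (ha : a ≠ 0) :
    (Finset.univ.filter fun p : F × F × F =>
        -p.2.1 ^ 2 + p.1 * p.2.2 = 0 ∧
        a * p.1 ^ 2 + b * p.1 * p.2.1 - p.2.1 * p.2.2 = 0 ∧
        a * p.1 * p.2.1 + b * p.2.1 ^ 2 - p.2.2 ^ 2 = 0).card =
      1 + (Fintype.card F - 1) *
        (Finset.univ.filter fun x : F => a * x ^ 3 - b * x ^ 2 + 1 = 0).card := by
  classical
  set R : Finset F := Finset.univ.filter fun x : F => a * x ^ 3 - b * x ^ 2 + 1 = 0 with hR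
  set T : Finset (F × F) := (Finset.univ.filter fun z : F => z ≠ 0) ×ˢ R with hT
  set f : F × F → F × F × F := fun p => (-p.2 * p.1, p.1, -p.1 / p.2) with hf
  have hSet : (Finset.univ.filter fun p : F × F × F =>
        -p.2.1 ^ 2 + p.1 * p.2.2 = 0 ∧
        a * p.1 ^ 2 + b * p.1 * p.2.1 - p.2.1 * p.2.2 = 0 ∧
        a * p.1 * p.2.1 + b * p.2.1 ^ 2 - p.2.2 ^ 2 = 0)
      = insert ((0 : F), (0 : F), (0 : F)) (T.image f) := by
    ext ⟨y, z, w⟩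
    simp only [mem_filter, mem_insert, mem_image, hT, hf, mem_product, mem_univ, true_and,
      Prod.mk.injEq, Prod.exists, hR]
    constructor
    · rintro ⟨h1, h2, h3⟩
      by_cases hy : y = 0
      · subst hy
        left
        have hz : z = 0 := by
          have : z ^ 2 = 0 := by linear_combination -h1
          exact pow_eq_zero_iff (by norm_num) |>.mp this
        subst hz
        have : w ^ 2 = 0 := by linear_combination -h3
        exact ⟨rfl, rfl, (pow_eq_zero_iff (by norm_num) |>.mp this)⟩
      · right
        have hz : z ≠ 0 := by
          intro hz0
          subst hz0
          apply hy
          have : a * y ^ 2 = 0 := by linear_combination h2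
          rcases mul_eq_zero.mp this with h | h
          · exact absurd h ha
          · exact pow_eq_zero_iff (by norm_num) |>.mp h
        have key : a * y ^ 3 + b * y ^ 2 * z - z ^ 3 = 0 := by
          linear_combination y * h2 + z * h1
        refine ⟨z, -y / z, ⟨hz, ?_⟩, ?_, rfl, ?_⟩
        · field_simp
          linear_combination -key
        · field_simp
        · field_simp
          linear_combination -h1
    · rintro (⟨hy, hz, hw⟩ | ⟨z, x, ⟨hz, hx⟩, hy, hz', hw⟩)
      · subst hy; subst hz; subst hw; norm_num
      · subst hy; subst hz'; subst hw
        have hx0 : x ≠ 0 := by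
          intro h; rw [h] at hx; simp at hx
        refine ⟨?_, ?_, ?_⟩
        · field_simp; ring
        · field_simp
          linear_combination z ^ 2 * hx
        · field_simp
          linear_combination -z ^ 2 * hx
  rw [hSet]
  have hnotmem : ((0 : F), (0 : F), (0 : F)) ∉ T.image f := by
    simp only [mem_image, hT, hf, mem_product, mem_filter, mem_univ, true_and, Prod.mk.injEq,
      Prod.exists, not_exists]
    rintro z x ⟨⟨hz, _⟩, _, hz0, _⟩
    exact hz hz0
  rw [Finset.card_insert_of_notMem hnotmem]
  have hinj : Set.InjOn f T := by
    rintro ⟨z, x⟩ hzx ⟨z', x'⟩ hz'x' h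
    have hmem : (z, x) ∈ T := Finset.mem_coe.mp hzx
    simp only [hT, mem_product, mem_filter, mem_univ, true_and] at hmem
    simp only [hf, Prod.mk.injEq] at h
    obtain ⟨h1, h2, h3⟩ := h
    subst h2
    have hx : x = x' := by
      have := mul_right_cancel₀ hmem.1 h1
      exact neg_inj.mp this
    rw [hx]
  rw [Finset.card_image_of_injOn hinj, add_comm]
  congr 1
  rw [hT, Finset.card_product]
  congr 1
  rw [Finset.filter_ne' Finset.univ 0, Finset.card_erase_of_mem (mem_univ 0), Finset.card_univ]
end
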